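/- Let A ∈ B(H₂, H₃) and B ∈ B(H₁, H₂) have closed ranges and suppose AB has closed range. Then B† = (AB)† A if and only if R(B) = R(A* A B). -/

import Mathlib

open ContinuousLinearMap

set_option maxHeartbeats 1000000

/-- `X` is the Moore-Penrose inverse of `A`: the four Penrose equations. -/
def IsMPInv {H₁ H₂ : Type*} [NormedAddCommGroup H₁] [InnerProductSpace ℂ H₁]
    [NormedAddCommGroup H₂] [InnerProductSpace ℂ H₂] [CompleteSpace H₁] [CompleteSpace H₂]
    (A : H₁ →L[ℂ] H₂) (X : H₂ →L[ℂ] H₁) : Prop :=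
  A ∘L X ∘L A = A ∧ X ∘L A ∘L X = X ∧
    ContinuousLinearMap.adjoint (A ∘L X) = A ∘L X ∧
    ContinuousLinearMap.adjoint (X ∘L A) = X ∘L A

theorem mp_unique' {E F : Type*} [NormedAddCommGroup E] [InnerProductSpace ℂ E]
    [NormedAddCommGroup F] [InnerProductSpace ℂ F] [CompleteSpace E] [CompleteSpace F]
    {S : E →L[ℂ] F} {X Y : F →L[ℂ] E} (hX : IsMPInv S X) (hY : IsMPInv S Y) : X = Y := by
  obtain ⟨hX1, hX2, hX3, hX4⟩ := hX
  obtain ⟨hY1, hY2, hY3, hY4⟩ := hY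
  have hX1' : (S ∘L X) ∘L S = S := hX1
  have hY1' : (S ∘L Y) ∘L S = S := hY1
  have hSX : S ∘L X = S ∘L Y := by
    calc S ∘L X = adjoint (S ∘L X) := hX3.symm
    _ = adjoint X ∘L adjoint S := adjoint_comp _ _
    _ = adjoint X ∘L adjoint ((S ∘L Y) ∘L S) := by rw [hY1']
    _ = adjoint X ∘L (adjoint S ∘L adjoint (S ∘L Y)) := by rw [adjoint_comp]
    _ = adjoint X ∘L (adjoint S ∘L (S ∘L Y)) := by rw [hY3]
    _ = (adjoint X ∘L adjoint S) ∘L (S ∘L Y) := rfl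
    _ = adjoint (S ∘L X) ∘L (S ∘L Y) := by rw [adjoint_comp]
    _ = (S ∘L X) ∘L (S ∘L Y) := by rw [hX3]
    _ = ((S ∘L X) ∘L S) ∘L Y := rfl
    _ = S ∘L Y := by rw [hX1']
  have hXS : X ∘L S = Y ∘L S := by
    calc X ∘L S = adjoint (X ∘L S) := hX4.symm
    _ = adjoint S ∘L adjoint X := adjoint_comp _ _
    _ = adjoint (S ∘L (Y ∘L S)) ∘L adjoint X := by rw [hY1]
    _ = (adjoint (Y ∘L S) ∘L adjoint S) ∘L adjoint X := by rw [adjoint_comp]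
    _ = ((Y ∘L S) ∘L adjoint S) ∘L adjoint X := by rw [hY4]
    _ = (Y ∘L S) ∘L (adjoint S ∘L adjoint X) := rfl
    _ = (Y ∘L S) ∘L adjoint (X ∘L S) := by rw [adjoint_comp]
    _ = (Y ∘L S) ∘L (X ∘L S) := by rw [hX4]
    _ = Y ∘L ((S ∘L X) ∘L S) := rfl
    _ = Y ∘L S := by rw [hX1']
  calc X = (X ∘L S) ∘L X := (hX2 : (X ∘L S) ∘L X = X).symm
  _ = (Y ∘L S) ∘L X := by rw [hXS]
  _ = Y ∘L (S ∘L X) := rfl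
  _ = Y ∘L (S ∘L Y) := by rw [hSX]
  _ = (Y ∘L S) ∘L Y := rfl
  _ = Y := hY2

theorem stmt14 {H₁ H₂ H₃ : Type*}
    [NormedAddCommGroup H₁] [InnerProductSpace ℂ H₁] [CompleteSpace H₁]
    [NormedAddCommGroup H₂] [InnerProductSpace ℂ H₂] [CompleteSpace H₂]
    [NormedAddCommGroup H₃] [InnerProductSpace ℂ H₃] [CompleteSpace H₃]
    (A : H₂ →L[ℂ] H₃) (B : H₁ →L[ℂ] H₂)
    (Ad : H₃ →L[ℂ] H₂) (Bd : H₂ →L[ℂ] H₁) (ABd : H₃ →L[ℂ] H₁)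
    (hAcl : IsClosed (LinearMap.range (A : H₂ →ₗ[ℂ] H₃) : Set H₃))
    (hBcl : IsClosed (LinearMap.range (B : H₁ →ₗ[ℂ] H₂) : Set H₂))
    (hABcl : IsClosed (LinearMap.range ((A ∘L B : H₁ →L[ℂ] H₃) : H₁ →ₗ[ℂ] H₃) : Set H₃))
    (hA : IsMPInv A Ad) (hB : IsMPInv B Bd) (hAB : IsMPInv (A ∘L B) ABd) :
    Bd = ABd ∘L A ↔ LinearMap.range (B : H₁ →ₗ[ℂ] H₂) = LinearMap.range ((ContinuousLinearMap.adjoint A ∘L A ∘L B : H₁ →L[ℂ] H₂) : H₁ →ₗ[ℂ] H₂) := by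
  obtain ⟨hA1, hA2, hA3, hA4⟩ := hA
  obtain ⟨hB1, hB2, hB3, hB4⟩ := hB
  obtain ⟨hT1, hT2, hT3, hT4⟩ := hAB
  have hT1g : ((A ∘L B) ∘L ABd) ∘L (A ∘L B) = A ∘L B := hT1
  have hT2g : ABd ∘L ((A ∘L B) ∘L ABd) = ABd := hT2
  have hBBd2 : adjoint Bd ∘L adjoint B = B ∘L Bd := by
    rw [← adjoint_comp]; exact hB3
  constructor
  · intro h
    -- T* T T† = T*
    have hTs : adjoint (A ∘L B) ∘L ((A ∘L B) ∘L ABd) = adjoint (A ∘L B) := by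
      calc adjoint (A ∘L B) ∘L ((A ∘L B) ∘L ABd)
          = adjoint (A ∘L B) ∘L adjoint ((A ∘L B) ∘L ABd) := by rw [hT3]
        _ = adjoint (((A ∘L B) ∘L ABd) ∘L (A ∘L B)) := (adjoint_comp _ _).symm
        _ = adjoint (A ∘L B) := by rw [hT1g]
    -- T T† (T†)* = (T†)*
    have hTt : ((A ∘L B) ∘L ABd) ∘L adjoint ABd = adjoint ABd := by
      calc ((A ∘L B) ∘L ABd) ∘L adjoint ABd
          = adjoint ((A ∘L B) ∘L ABd) ∘L adjoint ABd := by rw [hT3]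
        _ = adjoint (ABd ∘L ((A ∘L B) ∘L ABd)) := (adjoint_comp _ _).symm
        _ = adjoint ABd := by rw [hT2g]
    -- B Bd = A* ∘ ABd* ∘ B*
    have hBBd : B ∘L Bd = adjoint A ∘L (adjoint ABd ∘L adjoint B) := by
      calc B ∘L Bd = adjoint (B ∘L Bd) := hB3.symm
        _ = adjoint Bd ∘L adjoint B := adjoint_comp _ _
        _ = adjoint (ABd ∘L A) ∘L adjoint B := by rw [h]
        _ = (adjoint A ∘L adjoint ABd) ∘L adjoint B := by rw [adjoint_comp]
        _ = adjoint A ∘L (adjoint ABd ∘L adjoint B) := rfl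
    -- E2 : (A* A B) ∘ (ABd ∘ ABd* ∘ B* ∘ B) = B
    have E2 : (adjoint A ∘L A ∘L B) ∘L (ABd ∘L (adjoint ABd ∘L (adjoint B ∘L B))) = B := by
      calc (adjoint A ∘L A ∘L B) ∘L (ABd ∘L (adjoint ABd ∘L (adjoint B ∘L B)))
          = adjoint A ∘L ((((A ∘L B) ∘L ABd) ∘L adjoint ABd) ∘L (adjoint B ∘L B)) := rfl
        _ = adjoint A ∘L (adjoint ABd ∘L (adjoint B ∘L B)) := by rw [hTt]
        _ = (adjoint A ∘L (adjoint ABd ∘L adjoint B)) ∘L B := rfl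
        _ = (B ∘L Bd) ∘L B := by rw [hBBd]
        _ = B := hB1
    -- e1' : (T* A) (B Bd) = T* A
    have e1' : (adjoint (A ∘L B) ∘L A) ∘L (B ∘L Bd) = adjoint (A ∘L B) ∘L A := by
      calc (adjoint (A ∘L B) ∘L A) ∘L (B ∘L Bd)
          = (adjoint (A ∘L B) ∘L A) ∘L (B ∘L (ABd ∘L A)) := by rw [h]
        _ = (adjoint (A ∘L B) ∘L ((A ∘L B) ∘L ABd)) ∘L A := rfl
        _ = adjoint (A ∘L B) ∘L A := by rw [hTs]
    have E1 : (B ∘L Bd) ∘L (adjoint A ∘L (A ∘L B)) = adjoint A ∘L (A ∘L B) := by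
      have h2 := congrArg ContinuousLinearMap.adjoint e1'
      simp only [adjoint_comp, adjoint_adjoint] at h2
      rwa [hBBd2] at h2
    apply le_antisymm
    · intro y hy
      obtain ⟨x, hx⟩ := LinearMap.mem_range.mp hy
      refine LinearMap.mem_range.mpr ⟨ABd (adjoint ABd (adjoint B (B x))), ?_⟩
      have := DFunLike.congr_fun E2 x
      simp only [coe_coe, coe_comp', Function.comp_apply] at this hx ⊢
      rw [this, hx]
    · intro y hy
      obtain ⟨x, hx⟩ := LinearMap.mem_range.mp hy
      refine LinearMap.mem_range.mpr ⟨Bd (adjoint A (A (B x))), ?_⟩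
      have := DFunLike.congr_fun E1 x
      simp only [coe_coe, coe_comp', Function.comp_apply] at this hx ⊢
      rw [this, hx]
  · intro h
    -- (Ad A) A* = A*
    have hAs : (Ad ∘L A) ∘L adjoint A = adjoint A := by
      calc (Ad ∘L A) ∘L adjoint A = adjoint (Ad ∘L A) ∘L adjoint A := by rw [hA4]
        _ = adjoint (A ∘L (Ad ∘L A)) := (adjoint_comp _ _).symm
        _ = adjoint A := by rw [hA1]
    -- F1 : Ad ∘ A ∘ B = B   (from range B ⊆ range A* A B)
    have F1 : Ad ∘L (A ∘L B) = B := by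
      ext x
      have hx : B x ∈ LinearMap.range ((adjoint A ∘L A ∘L B : H₁ →L[ℂ] H₂) : H₁ →ₗ[ℂ] H₂) := by
        rw [← h]; exact LinearMap.mem_range_self _ x
      obtain ⟨w, hw⟩ := LinearMap.mem_range.mp hx
      have hsa := DFunLike.congr_fun hAs (A (B w))
      simp only [coe_coe, coe_comp', Function.comp_apply] at hw hsa ⊢
      rw [← hw, hsa]
    -- F2 : (B Bd) (A* A B) = A* A B  (from range A* A B ⊆ range B)
    have F2 : (B ∘L Bd) ∘L (adjoint A ∘L (A ∘L B)) = adjoint A ∘L (A ∘L B) := by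
      ext x
      have hx : adjoint A (A (B x)) ∈ LinearMap.range (B : H₁ →ₗ[ℂ] H₂) := by
        rw [h]
        refine LinearMap.mem_range.mpr ⟨x, ?_⟩
        simp only [coe_coe, coe_comp', Function.comp_apply]
      obtain ⟨w, hw⟩ := LinearMap.mem_range.mp hx
      have hb := DFunLike.congr_fun hB1 w
      simp only [coe_coe, coe_comp', Function.comp_apply] at hw hb ⊢
      rw [← hw, hb]
    -- S1 : (T* A) (B Bd) = T* A (adjoint of F2)
    have S1 : ((adjoint B ∘L adjoint A) ∘L A) ∘L (B ∘L Bd) = (adjoint B ∘L adjoint A) ∘L A := by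
      have h2 := congrArg ContinuousLinearMap.adjoint F2
      simp only [adjoint_comp, adjoint_adjoint] at h2
      rwa [hBBd2] at h2
    have hTTdagAdj : adjoint ABd ∘L (adjoint B ∘L adjoint A) = (A ∘L B) ∘L ABd := by
      calc adjoint ABd ∘L (adjoint B ∘L adjoint A)
          = adjoint ABd ∘L adjoint (A ∘L B) := by rw [adjoint_comp]
        _ = adjoint ((A ∘L B) ∘L ABd) := (adjoint_comp _ _).symm
        _ = (A ∘L B) ∘L ABd := hT3
    -- S2 : T Bd = T T† A
    have S2 : (A ∘L B) ∘L Bd = ((A ∘L B) ∘L ABd) ∘L A := by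
      calc (A ∘L B) ∘L Bd
          = (((A ∘L B) ∘L ABd) ∘L (A ∘L B)) ∘L Bd := by rw [hT1g]
        _ = ((adjoint ABd ∘L (adjoint B ∘L adjoint A)) ∘L (A ∘L B)) ∘L Bd := by
            rw [hTTdagAdj]
        _ = adjoint ABd ∘L (((adjoint B ∘L adjoint A) ∘L A) ∘L (B ∘L Bd)) := rfl
        _ = adjoint ABd ∘L ((adjoint B ∘L adjoint A) ∘L A) := by rw [S1]
        _ = (adjoint ABd ∘L (adjoint B ∘L adjoint A)) ∘L A := rfl
        _ = ((A ∘L B) ∘L ABd) ∘L A := by rw [hTTdagAdj]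
    -- KEY : B Bd = B (ABd A)
    have KEY : B ∘L Bd = B ∘L (ABd ∘L A) := by
      calc B ∘L Bd = (Ad ∘L (A ∘L B)) ∘L Bd := by rw [F1]
        _ = Ad ∘L ((A ∘L B) ∘L Bd) := rfl
        _ = Ad ∘L (((A ∘L B) ∘L ABd) ∘L A) := by rw [S2]
        _ = (Ad ∘L (A ∘L B)) ∘L (ABd ∘L A) := rfl
        _ = B ∘L (ABd ∘L A) := by rw [F1]
    have P1 : B ∘L (ABd ∘L A) ∘L B = B := by
      calc B ∘L (ABd ∘L A) ∘L B = (B ∘L (ABd ∘L A)) ∘L B := rfl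
        _ = (B ∘L Bd) ∘L B := by rw [← KEY]
        _ = B := hB1
    have P2 : (ABd ∘L A) ∘L B ∘L (ABd ∘L A) = ABd ∘L A := by
      calc (ABd ∘L A) ∘L B ∘L (ABd ∘L A)
          = (ABd ∘L ((A ∘L B) ∘L ABd)) ∘L A := rfl
        _ = ABd ∘L A := by rw [hT2g]
    have P3 : adjoint (B ∘L (ABd ∘L A)) = B ∘L (ABd ∘L A) := by
      rw [← KEY]; exact hB3
    have P4 : adjoint ((ABd ∘L A) ∘L B) = (ABd ∘L A) ∘L B := by
      have hg : (ABd ∘L A) ∘L B = ABd ∘L (A ∘L B) := rfl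
      rw [hg]; exact hT4
    exact mp_unique' ⟨hB1, hB2, hB3, hB4⟩ ⟨P1, P2, P3, P4⟩
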